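/- arXiv:2303.04321 — 5 statements merged into one kernel-verified Lean document; each statement's English description precedes it below -/
import Mathlib

section
/- Assume σA² > 0, σcov² > 0, σrec² > 0 and σcov² > 4σrec². Then Ψ := σcov⁴·(σA² + σcov² − 2σrec²)·(σcov² − 2σrec²)·σrec²·(σA² + 2σrec²) is strictly positive, and the number Υ := (σcov²·(σcov² − 2σrec²)·(σA² + 2σrec²) − √(2Ψ)) / (σA²·(σcov² − 4σrec²)·(σcov² − 2σrec²)) satisfies 0 < Υ < 1. -/
/-- Ψ as in Proposition 2: `a`, `c`, `r` stand for σA², σcov², σrec². -/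
noncomputable def Psi (a c r : ℝ) : ℝ :=
  c ^ 2 * (a + c - 2 * r) * (c - 2 * r) * r * (a + 2 * r)

/-- Υ, the candidate optimal power-splitting ratio. -/
noncomputable def Upsilon (a c r : ℝ) : ℝ :=
  (c * (c - 2 * r) * (a + 2 * r) - Real.sqrt (2 * Psi a c r)) /
    (a * (c - 4 * r) * (c - 2 * r))

/-- under σA², σcov², σrec² > 0 and σcov² > 4σrec², Ψ > 0 and 0 < Υ < 1. -/
theorem stmt_0 (a c r : ℝ) (ha : 0 < a) (hc : 0 < c) (hr : 0 < r)
    (h4 : 4 * r < c) :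
    0 < Psi a c r ∧ 0 < Upsilon a c r ∧ Upsilon a c r < 1 := by
  have h2 : 0 < c - 2 * r := by linarith
  have hΨ : 0 < Psi a c r := by
    unfold Psi
    have : 0 < a + c - 2 * r := by linarith
    positivity
  have hD : 0 < a * (c - 4 * r) * (c - 2 * r) := by
    have : 0 < c - 4 * r := by linarith
    positivity
  -- upper bound on sqrt
  have hX : 0 < c * (c - 2 * r) * (a + 2 * r) := by positivity
  have hupper : Real.sqrt (2 * Psi a c r) < c * (c - 2 * r) * (a + 2 * r) := by
    rw [show c * (c - 2 * r) * (a + 2 * r)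
        = Real.sqrt ((c * (c - 2 * r) * (a + 2 * r)) ^ 2) from
        (Real.sqrt_sq hX.le).symm]
    apply Real.sqrt_lt_sqrt (by positivity)
    unfold Psi
    nlinarith [mul_pos hX (mul_pos hc (mul_pos ha (sub_pos.mpr h4)))]
  have hlower : 2 * r * (c - 2 * r) * (c + 2 * a) < Real.sqrt (2 * Psi a c r) := by
    rw [show (2 : ℝ) * r * (c - 2 * r) * (c + 2 * a)
        = Real.sqrt ((2 * r * (c - 2 * r) * (c + 2 * a)) ^ 2) from
        (Real.sqrt_sq (by positivity)).symm]
    apply Real.sqrt_lt_sqrt (by positivity)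
    unfold Psi
    nlinarith [mul_pos (mul_pos hr h2) (sub_pos.mpr h4), sq_nonneg (c - 4 * r),
      mul_pos hr (sub_pos.mpr h4), mul_pos (mul_pos hr hr) (sub_pos.mpr h4),
      mul_pos ha (mul_pos hr (sub_pos.mpr h4))]
  unfold Upsilon
  refine ⟨hΨ, ?_, ?_⟩
  · apply div_pos _ hD
    linarith
  · rw [div_lt_one hD]
    nlinarith [hlower]
end

section
/- Assume σA² > 0, σcov² > 0, σrec² > 0 and σcov² > 4σrec². Then the function s has derivative zero at ρ = Υ, i.e., s is differentiable at Υ and s′(Υ) = 0. -/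
/-- The ρ-dependent factor `s(ρ)` of the high-SNR mutual information. -/
noncomputable def s (a c r : ℝ) (ρ : ℝ) : ℝ :=
  (c / ρ + a) *
    (a + ((c / ρ) * (2 * r / (1 - ρ))) / ((c / ρ) + (2 * r / (1 - ρ))))

/-- s is differentiable at Υ with derivative zero. -/
theorem stmt_1 (a c r : ℝ) (ha : 0 < a) (hc : 0 < c) (hr : 0 < r)
    (h4 : 4 * r < c) :
    HasDerivAt (s a c r) 0 (Upsilon a c r) := by
  set q := Real.sqrt (2 * Psi a c r) with hqdef
  set x := Upsilon a c r with hxdef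
  have hm : 0 < c - 2 * r := by linarith
  have h4' : 0 < c - 4 * r := by linarith
  have hPsi : 0 < 2 * Psi a c r := by
    have h1 : 0 < a + c - 2 * r := by linarith
    unfold Psi
    have := mul_pos (mul_pos (mul_pos (mul_pos (pow_pos hc 2) h1) hm) hr)
      (by linarith : (0:ℝ) < a + 2 * r)
    linarith
  have hq0 : 0 ≤ q := Real.sqrt_nonneg _
  have hq2 : q ^ 2 = 2 * Psi a c r := Real.sq_sqrt hPsi.le
  have hD : 0 < a * (c - 4 * r) * (c - 2 * r) := by positivity
  have hN : 0 < c * (c - 2 * r) * (a + 2 * r) := by positivity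
  -- q < N
  have hqN : q < c * (c - 2 * r) * (a + 2 * r) := by
    have hlt : q ^ 2 < (c * (c - 2 * r) * (a + 2 * r)) ^ 2 := by
      rw [hq2]
      have key : (c * (c - 2 * r) * (a + 2 * r)) ^ 2 - 2 * Psi a c r
          = a * (c - 4 * r) * (c ^ 2 * (c - 2 * r) * (a + 2 * r)) := by
        unfold Psi; ring
      nlinarith [mul_pos (mul_pos ha h4')
        (mul_pos (mul_pos (pow_pos hc 2) hm) (by linarith : (0:ℝ) < a + 2 * r))]
    exact lt_of_pow_lt_pow_left₀ 2 hN.le hlt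
  have hx0 : 0 < x := by
    rw [hxdef]
    unfold Upsilon
    rw [← hqdef]
    exact div_pos (by linarith) hD
  have hx1 : x < 1 := by
    rw [hxdef]
    unfold Upsilon
    rw [← hqdef]
    rw [div_lt_one hD]
    have hND : c * (c - 2 * r) * (a + 2 * r) - a * (c - 4 * r) * (c - 2 * r)
        = 2 * r * (c - 2 * r) * (c + 2 * a) := by ring
    have hlt : (2 * r * (c - 2 * r) * (c + 2 * a)) ^ 2 < q ^ 2 := by
      rw [hq2]
      have key : 2 * Psi a c r - (2 * r * (c - 2 * r) * (c + 2 * a)) ^ 2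
          = 2 * r * (c - 2 * r) * (a * (c - 4 * r) ^ 2 * (a + c)) := by
        unfold Psi; ring
      nlinarith [mul_pos (mul_pos (mul_pos (by linarith : (0:ℝ) < 2*r) hm)
        (mul_pos (mul_pos ha (pow_pos h4' 2)) (by linarith : (0:ℝ) < a + c))) (by norm_num : (0:ℝ) < 1)]
    have h2 : 2 * r * (c - 2 * r) * (c + 2 * a) < q :=
      lt_of_pow_lt_pow_left₀ 2 hq0 hlt
    linarith
  -- the quadratic relation satisfied by x
  have hkey : a * (c - 4 * r) * (c - 2 * r) * x
      = c * (c - 2 * r) * (a + 2 * r) - q := by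
    rw [hxdef]; unfold Upsilon; rw [← hqdef]
    field_simp
    exact mul_div_cancel_left₀ _ (by linarith)
  have hquad : a * (c - 2 * r) * (c - 4 * r) * x ^ 2
      - 2 * c * (c - 2 * r) * (a + 2 * r) * x + c ^ 2 * (a + 2 * r) = 0 := by
    have hq' : q = c * (c - 2 * r) * (a + 2 * r)
        - a * (c - 4 * r) * (c - 2 * r) * x := by linarith
    have h2 : (c * (c - 2 * r) * (a + 2 * r)
        - a * (c - 4 * r) * (c - 2 * r) * x) ^ 2 = 2 * Psi a c r := by
      rw [← hq']; exact hq2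
    unfold Psi at h2
    have hD' : (a * (c - 4 * r) * (c - 2 * r)) ≠ 0 := hD.ne'
    have := mul_left_cancel₀ hD' (b := a * (c - 2 * r) * (c - 4 * r) * x ^ 2
      - 2 * c * (c - 2 * r) * (a + 2 * r) * x + c ^ 2 * (a + 2 * r)) (c := 0)
    apply this
    linear_combination h2
  -- nonvanishing facts at x
  have hx0' : x ≠ 0 := hx0.ne'
  have hx1' : x ≠ 1 := hx1.ne
  have hK : 0 < c - (c - 2 * r) * x := by nlinarith
  have hK' : c - (c - 2 * r) * x ≠ 0 := hK.ne'
  -- s agrees with a simpler function near x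
  have hsg : s a c r =ᶠ[nhds x]
      (fun ρ : ℝ => (c / ρ + a) * (a + 2 * r * c / (c - (c - 2 * r) * ρ))) := by
    have e1 : ∀ᶠ ρ in nhds x, ρ ≠ 0 := eventually_ne_nhds hx0'
    have e2 : ∀ᶠ ρ in nhds x, ρ ≠ 1 := eventually_ne_nhds hx1'
    have e3 : ∀ᶠ ρ in nhds x, c - (c - 2 * r) * ρ ≠ 0 := by
      have hcont : ContinuousAt (fun ρ : ℝ => c - (c - 2 * r) * ρ) x := by
        fun_prop
      exact hcont.eventually_ne hK'
    filter_upwards [e1, e2, e3] with ρ h1 h2 h3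
    have h2' : (1 : ℝ) - ρ ≠ 0 := sub_ne_zero_of_ne (Ne.symm h2)
    have hnum : c * (1 - ρ) + ρ * (2 * r) ≠ 0 := by
      intro h; exact h3 (by linarith)
    have key : ((c / ρ) * (2 * r / (1 - ρ))) / ((c / ρ) + (2 * r / (1 - ρ)))
        = 2 * r * c / (c - (c - 2 * r) * ρ) := by
      rw [div_add_div _ _ h1 h2', div_div_eq_mul_div, div_mul_eq_mul_div,
        div_eq_div_iff hnum h3]
      field_simp
      ring
    unfold s
    rw [key]
  -- derivative of the simpler function
  have h1 : HasDerivAt (fun ρ : ℝ => c / ρ) ((0 * x - c * 1) / x ^ 2) x :=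
    (hasDerivAt_const x c).div (hasDerivAt_id x) hx0'
  have hKd : HasDerivAt (fun ρ : ℝ => c - (c - 2 * r) * ρ)
      (0 - (c - 2 * r) * 1) x :=
    (hasDerivAt_const x c).sub ((hasDerivAt_id x).const_mul (c - 2 * r))
  have h2 : HasDerivAt (fun ρ : ℝ => 2 * r * c / (c - (c - 2 * r) * ρ))
      ((0 * (c - (c - 2 * r) * x) - 2 * r * c * (0 - (c - 2 * r) * 1))
        / (c - (c - 2 * r) * x) ^ 2) x :=
    (hasDerivAt_const x (2 * r * c)).div hKd hK'
  have Hg : HasDerivAt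
      (fun ρ : ℝ => (c / ρ + a) * (a + 2 * r * c / (c - (c - 2 * r) * ρ)))
      ((0 * x - c * 1) / x ^ 2 * (a + 2 * r * c / (c - (c - 2 * r) * x))
        + (c / x + a) * ((0 * (c - (c - 2 * r) * x)
          - 2 * r * c * (0 - (c - 2 * r) * 1)) / (c - (c - 2 * r) * x) ^ 2)) x :=
    (h1.add_const a).mul (h2.const_add a)
  have hE : (0 * x - c * 1) / x ^ 2 * (a + 2 * r * c / (c - (c - 2 * r) * x))
        + (c / x + a) * ((0 * (c - (c - 2 * r) * x)
          - 2 * r * c * (0 - (c - 2 * r) * 1)) / (c - (c - 2 * r) * x) ^ 2)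
      = 0 := by
    generalize hKdef : c - (c - 2 * r) * x = K at *
    field_simp
    subst hKdef
    linear_combination (-c) * hquad
  rw [← hE]
  exact Hg.congr_of_eventuallyEq hsg
end

section
/- Assume σA² > 0, σcov² > 0, σrec² > 0 and σcov² > 4σrec². Then the function s has a strict local minimum at ρ = Υ (in particular, the second derivative of s at Υ is strictly positive). -/
/-- s has a strict local minimum at Υ; in particular the second
derivative of s at Υ is strictly positive. -/
theorem stmt_2 (a c r : ℝ) (ha : 0 < a) (hc : 0 < c) (hr : 0 < r)
    (h4 : 4 * r < c) :
    (∃ ε > 0, ∀ ρ : ℝ, |ρ - Upsilon a c r| < ε → ρ ≠ Upsilon a c r →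
      s a c r (Upsilon a c r) < s a c r ρ) ∧
    0 < deriv (deriv (s a c r)) (Upsilon a c r) := by
  have hk : 0 < c - 2*r := by linarith
  have hm : 0 < c - 4*r := by linarith
  have hP : 0 < a + 2*r := by linarith
  have hacr : 0 < a + c - 2*r := by linarith
  have hPsi : 0 < 2 * Psi a c r := by unfold Psi; positivity
  set t := Real.sqrt (2 * Psi a c r) with htdef
  have ht0 : 0 ≤ t := Real.sqrt_nonneg _
  have ht2 : t^2 = 2*(c^2*(a+c-2*r)*(c-2*r)*r*(a+2*r)) := by
    rw [htdef, Real.sq_sqrt (le_of_lt hPsi), Psi]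
  have hden : 0 < a*(c-4*r)*(c-2*r) := by positivity
  have htlt : t < c*(c-2*r)*(a+2*r) := by
    have hp : 0 < c^2*(c-2*r)*(a+2*r)*(a*(c-4*r)) := by positivity
    have h2 : t^2 < (c*(c-2*r)*(a+2*r))^2 := by nlinarith [ht2, hp]
    exact lt_of_pow_lt_pow_left₀ 2 (by positivity) h2
  have hu' : Upsilon a c r = (c*(c-2*r)*(a+2*r) - t)/(a*(c-4*r)*(c-2*r)) := by
    rw [Upsilon]
  set u := Upsilon a c r with hu
  have hu_pos : 0 < u := by
    rw [hu']; exact div_pos (by linarith) hden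
  have hlt1 : u < 1 := by
    rw [hu', div_lt_one hden]
    have hp : 0 < 2*(c-2*r)*r*(a*(c-4*r)^2*(c+a)) := by positivity
    have h2 : (2*r*(c-2*r)*(c+2*a))^2 < t^2 := by nlinarith [ht2, hp]
    have key : 2*r*(c-2*r)*(c+2*a) < t := lt_of_pow_lt_pow_left₀ 2 ht0 h2
    linarith
  have h1 : a*(c-4*r)*(c-2*r)*u = c*(c-2*r)*(a+2*r) - t := by
    rw [hu', mul_div_assoc']; exact mul_div_cancel_left₀ _ (ne_of_gt hden)
  have hquad' : (a*(c-4*r)*(c-2*r)) *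
      (a*(c-4*r)*(c-2*r)*u^2 - 2*(c-2*r)*c*(a+2*r)*u + c^2*(a+2*r)) = 0 := by
    linear_combination (a*(c-4*r)*(c-2*r)*u + c*(c-2*r)*(a+2*r) - t
      - 2*(c-2*r)*c*(a+2*r)) * h1 + ht2
  have hquad : a*(c-4*r)*(c-2*r)*u^2 - 2*(c-2*r)*c*(a+2*r)*u + c^2*(a+2*r) = 0 :=
    (mul_eq_zero.mp hquad').resolve_left (ne_of_gt hden)
  clear_value u t
  -- s = N/Q on (0,1)
  have hs : ∀ x : ℝ, 0 < x → x < 1 →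
      s a c r x = ((c + a*x) * (c*(a+2*r) - a*(c-2*r)*x)) / (x*(c-(c-2*r)*x)) := by
    intro x hx0 hx1
    have hx : x ≠ 0 := ne_of_gt hx0
    have h1xp : 0 < 1 - x := by linarith
    have h1x : (1:ℝ) - x ≠ 0 := ne_of_gt h1xp
    have hQpos : 0 < c - (c-2*r)*x := by nlinarith
    have hQne : c - (c-2*r)*x ≠ 0 := ne_of_gt hQpos
    have hxx : x*(1-x) ≠ 0 := mul_ne_zero hx h1x
    have hinner : (c/x) + (2*r/(1-x)) = (c - (c-2*r)*x)/(x*(1-x)) := by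
      rw [div_add_div _ _ hx h1x, div_eq_div_iff hxx hxx]; ring
    have hfrac : c / x * (2 * r / (1 - x)) / ((c - (c - 2 * r) * x) / (x * (1 - x)))
        = 2*r*c / (c - (c-2*r)*x) := by
      rw [div_mul_div_comm, div_div_eq_mul_div, div_mul_cancel₀ _ hxx]
      rw [div_eq_div_iff hQne hQne]; ring
    have e1 : c/x + a = (c + a*x)/x := by
      rw [div_add' _ _ _ hx]
    have e2 : a + 2*r*c/(c - (c-2*r)*x) = (a*(c - (c-2*r)*x) + 2*r*c)/(c - (c-2*r)*x) := by
      rw [add_div' _ _ _ hQne]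
    rw [s, hinner, hfrac, e1, e2, div_mul_div_comm]
    congr 1
    ring
  have hinpos : 0 < c*(a+2*r) - a*(c-4*r)*u := by nlinarith [mul_pos (mul_pos ha hm) hu_pos]
  have hApos : 0 < (c-2*r)*c*(c*(a+2*r) - a*(c-4*r)*u) :=
    mul_pos (mul_pos hk hc) hinpos
  have hQu : 0 < u*(c-(c-2*r)*u) := by
    have h9 : (c-2*r)*u < (c-2*r)*1 := mul_lt_mul_of_pos_left hlt1 hk
    exact mul_pos hu_pos (by linarith)
  have hkey : ∀ x : ℝ,
      ((c + a*x) * (c*(a+2*r) - a*(c-2*r)*x)) * (u*(c-(c-2*r)*u))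
      - ((c + a*u) * (c*(a+2*r) - a*(c-2*r)*u)) * (x*(c-(c-2*r)*x))
      = ((c-2*r)*c*(c*(a+2*r) - a*(c-4*r)*u)) * (x-u)^2 := by
    intro x; linear_combination (c*(u-x)) * hquad
  constructor
  · refine ⟨min u (1-u), lt_min hu_pos (by linarith), fun ρ hρ hne => ?_⟩
    have h6 := abs_lt.mp hρ
    have hρ0 : 0 < ρ := by
      have := min_le_left u (1-u); linarith [h6.1]
    have hρ1 : ρ < 1 := by
      have := min_le_right u (1-u); linarith [h6.2]
    have hQρ : 0 < ρ*(c-(c-2*r)*ρ) := by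
      have h9 : (c-2*r)*ρ < (c-2*r)*1 := mul_lt_mul_of_pos_left hρ1 hk
      exact mul_pos hρ0 (by linarith)
    rw [hs u hu_pos hlt1, hs ρ hρ0 hρ1, div_lt_div_iff₀ hQu hQρ]
    have h7 : (0:ℝ) < (ρ-u)^2 := by
      have h8 : ρ - u ≠ 0 := sub_ne_zero.mpr hne
      positivity
    linarith [hkey ρ, mul_pos hApos h7]
  · set f : ℝ → ℝ := fun x => ((c + a*x) * (c*(a+2*r) - a*(c-2*r)*x)) / (x*(c-(c-2*r)*x)) with hf
    set g : ℝ → ℝ := fun x => (-c)*(a*(c-4*r)*(c-2*r)*x^2 - 2*(c-2*r)*c*(a+2*r)*x + c^2*(a+2*r)) / (x*(c-(c-2*r)*x))^2 with hg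
    have hmem : Set.Ioo (0:ℝ) 1 ∈ nhds u := Ioo_mem_nhds hu_pos hlt1
    have hNd : ∀ x : ℝ, HasDerivAt (fun y => (c + a*y) * (c*(a+2*r) - a*(c-2*r)*y))
        (a * (c*(a+2*r) - a*(c-2*r)*x) + (c + a*x) * (-(a*(c-2*r)))) x := by
      intro x
      have hd1 : HasDerivAt (fun y : ℝ => c + a*y) a x := by
        exact (((hasDerivAt_id' x).const_mul a).const_add c).congr_deriv (by ring)
      have hd2 : HasDerivAt (fun y : ℝ => c*(a+2*r) - a*(c-2*r)*y) (-(a*(c-2*r))) x := by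
        exact (((hasDerivAt_id' x).const_mul (a*(c-2*r))).const_sub (c*(a+2*r))).congr_deriv (by ring)
      exact hd1.mul hd2
    have hQd : ∀ x : ℝ, HasDerivAt (fun y => y*(c-(c-2*r)*y)) (1*(c-(c-2*r)*x) + x*(-(c-2*r))) x := by
      intro x
      have hd2 : HasDerivAt (fun y : ℝ => c - (c-2*r)*y) (-(c-2*r)) x := by
        exact (((hasDerivAt_id' x).const_mul (c-2*r)).const_sub c).congr_deriv (by ring)
      exact (hasDerivAt_id x).mul hd2
    have hQpos : ∀ x ∈ Set.Ioo (0:ℝ) 1, 0 < x*(c-(c-2*r)*x) := by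
      intro x hx
      obtain ⟨hx0, hx1⟩ := hx
      have h9 : (c-2*r)*x < (c-2*r)*1 := mul_lt_mul_of_pos_left hx1 hk
      exact mul_pos hx0 (by linarith)
    have hfd : ∀ x ∈ Set.Ioo (0:ℝ) 1, deriv f x = g x := by
      intro x hx
      have hQx := hQpos x hx
      have hder := (hNd x).div (hQd x) (ne_of_gt hQx)
      rw [hf, hg]
      rw [(show HasDerivAt (fun y => ((c + a*y) * (c*(a+2*r) - a*(c-2*r)*y)) / (y*(c-(c-2*r)*y))) _ x from hder).deriv]
      congr 1
      ring
    have hsf : s a c r =ᶠ[nhds u] f := by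
      filter_upwards [hmem] with x hx
      exact hs x hx.1 hx.2
    have hfg : deriv f =ᶠ[nhds u] g := by
      filter_upwards [hmem] with x hx
      exact hfd x hx
    have e1 : deriv (deriv (s a c r)) u = deriv (deriv f) u :=
      (hsf.deriv).deriv_eq
    have e2 : deriv (deriv f) u = deriv g u := hfg.deriv_eq
    have hQu2 : (u*(c-(c-2*r)*u))^2 ≠ 0 := by positivity
    have hGd : HasDerivAt (fun y : ℝ => (-c)*(a*(c-4*r)*(c-2*r)*y^2 - 2*(c-2*r)*c*(a+2*r)*y + c^2*(a+2*r)))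
        ((-c)*(a*(c-4*r)*(c-2*r)*(2*u) - 2*(c-2*r)*c*(a+2*r))) u := by
      have hy : HasDerivAt (fun y : ℝ => a*(c-4*r)*(c-2*r)*y^2 - 2*(c-2*r)*c*(a+2*r)*y + c^2*(a+2*r))
          (a*(c-4*r)*(c-2*r)*(2*u) - 2*(c-2*r)*c*(a+2*r)) u := by
        have hsq : HasDerivAt (fun y : ℝ => y^2) (2*u) u := by
          simpa using hasDerivAt_pow 2 u
        simpa using ((hsq.const_mul (a*(c-4*r)*(c-2*r))).sub
          ((hasDerivAt_id u).const_mul (2*(c-2*r)*c*(a+2*r)))).add_const (c^2*(a+2*r))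
      exact hy.const_mul (-c)
    have hQ2d := (hQd u).pow 2
    have hgd := hGd.div hQ2d hQu2
    have e3 := (show HasDerivAt (fun y : ℝ => (-c)*(a*(c-4*r)*(c-2*r)*y^2 - 2*(c-2*r)*c*(a+2*r)*y + c^2*(a+2*r)) / (y*(c-(c-2*r)*y))^2) _ u from hgd).deriv
    rw [e1, e2]
    rw [hg]
    rw [e3]
    have hGu0 : (-c)*(a*(c-4*r)*(c-2*r)*u^2 - 2*(c-2*r)*c*(a+2*r)*u + c^2*(a+2*r)) = 0 := by
      rw [hquad]; ring
    rw [hGu0]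
    have hD1 : 0 < (-c)*(a*(c-4*r)*(c-2*r)*(2*u) - 2*(c-2*r)*c*(a+2*r)) := by
      have h12 : (-c)*(a*(c-4*r)*(c-2*r)*(2*u) - 2*(c-2*r)*c*(a+2*r))
          = 2*((c-2*r)*c*(c*(a+2*r) - a*(c-4*r)*u)) := by ring
      rw [h12]; linarith [hApos]
    have hB : 0 < (u*(c-(c-2*r)*u))^2 := by positivity
    rw [zero_mul, sub_zero]
    exact div_pos (mul_pos hD1 hB) (by positivity)
end

section
/- Assume σA² > 0, σcov² > 0, σrec² > 0 and σcov² > 4σrec². Then the function S : ρ ↦ −(1/2)·log₂(s(ρ)) has a strict local maximum at ρ = Υ. -/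
/-- The ρ-dependent part of the high-SNR mutual information: S(ρ) = −(1/2)·log₂ s(ρ). -/
noncomputable def S (a c r : ℝ) (ρ : ℝ) : ℝ := -(1 / 2) * Real.logb 2 (s a c r ρ)

set_option maxHeartbeats 2000000

/-- S(ρ) = −(1/2)·log₂ s(ρ) has a strict local maximum at ρ = Υ. -/
theorem stmt_3 (a c r : ℝ) (ha : 0 < a) (hc : 0 < c) (hr : 0 < r)
    (h4 : 4 * r < c) :
    ∃ ε > 0, ∀ ρ : ℝ, |ρ - Upsilon a c r| < ε → ρ ≠ Upsilon a c r →
      S a c r ρ < S a c r (Upsilon a c r) := by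
  have hc2 : (0:ℝ) < c - 2*r := by linarith
  have hc4 : (0:ℝ) < c - 4*r := by linarith
  set u := Upsilon a c r with hu
  set t := Real.sqrt (2 * Psi a c r) with htdef
  have hPsi : 0 < 2 * Psi a c r := by
    have h1 : (0:ℝ) < a + c - 2*r := by linarith
    have h2 : (0:ℝ) < a + 2*r := by linarith
    have := mul_pos (mul_pos (mul_pos (mul_pos (pow_pos hc 2) h1) hc2) hr) h2
    unfold Psi; linarith
  have ht2 : t^2 = 2 * Psi a c r := Real.sq_sqrt hPsi.le
  have ht2' : t^2 = 2 * (c ^ 2 * (a + c - 2 * r) * (c - 2 * r) * r * (a + 2 * r)) := by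
    rw [ht2]; unfold Psi; ring
  have hB : (0:ℝ) < c*(a+2*r)*(c-2*r) := by positivity
  have ht0 : 0 < t := Real.sqrt_pos.mpr hPsi
  -- abbreviations
  have hA : (0:ℝ) < a*(c-4*r)*(c-2*r) := by positivity
  have hut : u = (c*(a+2*r)*(c-2*r) - t) / (a*(c-4*r)*(c-2*r)) := by
    rw [hu]; unfold Upsilon; rw [← htdef]; ring_nf
  -- the quadratic equation satisfied by u
  have hquad : a*(c-4*r)*(c-2*r)*u^2 - 2*(c*(a+2*r)*(c-2*r))*u + c^2*(a+2*r) = 0 := by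
    rw [hut]
    have hc2' : c - r*2 ≠ 0 := by linarith
    have hc4' : c - 4*r ≠ 0 := by linarith
    field_simp
    nlinarith [ht2']
  -- t < B
  have hAC : (0:ℝ) < (a*(c-4*r)*(c-2*r)) * (c^2*(a+2*r)) := by positivity
  have htB : t < c*(a+2*r)*(c-2*r) := by
    by_contra h
    push_neg at h
    nlinarith [ht2', mul_nonneg (sub_nonneg.mpr h) (by linarith : (0:ℝ) ≤ t + c*(a+2*r)*(c-2*r))]
  have hu0 : 0 < u := by
    rw [hut]
    apply div_pos _ hA
    linarith
  have hu1 : u < 1 := by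
    -- t > B - A since t^2 - (B-A)^2 = A*(2B - A - C) = A*2r(a+c)(c-4r) > 0
    have h1 : t > c*(a+2*r)*(c-2*r) - a*(c-4*r)*(c-2*r) := by
      by_contra h
      push_neg at h
      have hd : (0:ℝ) < c*(a+2*r)*(c-2*r) - a*(c-4*r)*(c-2*r) - t + (t + t) := by linarith
      nlinarith [ht2', mul_nonneg (sub_nonneg.mpr h) (by linarith : (0:ℝ) ≤ c*(a+2*r)*(c-2*r) - a*(c-4*r)*(c-2*r) + t), mul_pos hA (by positivity : (0:ℝ) < 2*r*(a+c)*(c-4*r))]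
    rw [hut]
    rw [div_lt_one hA]
    linarith
  -- rewrite s as a rational function on (0,1)
  have hs_eq : ∀ ρ : ℝ, 0 < ρ → ρ < 1 → s a c r ρ =
      ((c + a*ρ)*(a*c + 2*c*r - a*(c-2*r)*ρ)) / (ρ*(c - (c-2*r)*ρ)) := by
    intro ρ h0 h1
    have h1' : (0:ℝ) < 1 - ρ := by linarith
    have hd : 0 < c/ρ + 2*r/(1-ρ) := by positivity
    have hq : 0 < c - (c-2*r)*ρ := by nlinarith
    unfold s
    rw [eq_div_iff (mul_pos h0 hq).ne']
    field_simp
    ring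
  have hQ : ∀ ρ : ℝ, 0 < ρ → ρ < 1 → 0 < ρ*(c - (c-2*r)*ρ) := by
    intro ρ h0 h1
    have hq : 0 < c - (c-2*r)*ρ := by nlinarith
    positivity
  have hP : ∀ ρ : ℝ, 0 < ρ → ρ < 1 → 0 < (c + a*ρ)*(a*c + 2*c*r - a*(c-2*r)*ρ) := by
    intro ρ h0 h1
    have hy : 0 < a*c + 2*c*r - a*(c-2*r)*ρ := by
      nlinarith [mul_lt_mul_of_pos_left h1 (mul_pos ha hc2)]
    have hx : 0 < c + a*ρ := by positivity
    exact mul_pos hx hy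
  -- the key coefficient K
  have hK : 0 < c*(c-2*r)*(a*c + 2*c*r - a*(c-4*r)*u) := by
    have hy : 0 < a*c + 2*c*r - a*(c-4*r)*u := by
      nlinarith [mul_lt_mul_of_pos_left hu1 (mul_pos ha hc4)]
    exact mul_pos (mul_pos hc hc2) hy
  -- choose ε
  refine ⟨min u (1-u), lt_min hu0 (by linarith), ?_⟩
  intro ρ hρ hne
  obtain ⟨h1, h2⟩ := abs_lt.mp hρ
  have hm1 := min_le_left u (1-u)
  have hm2 := min_le_right u (1-u)
  have hρ0 : 0 < ρ := by linarith
  have hρ1 : ρ < 1 := by linarith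
  -- main inequality: s u < s ρ
  have hsuρ : s a c r u < s a c r ρ := by
    rw [hs_eq u hu0 hu1, hs_eq ρ hρ0 hρ1]
    rw [div_lt_div_iff₀ (hQ u hu0 hu1) (hQ ρ hρ0 hρ1)]
    have key : (c + a*ρ)*(a*c + 2*c*r - a*(c-2*r)*ρ) * (u*(c - (c-2*r)*u))
        - (c + a*u)*(a*c + 2*c*r - a*(c-2*r)*u) * (ρ*(c - (c-2*r)*ρ))
        = c*(c-2*r)*(a*c + 2*c*r - a*(c-4*r)*u) * (ρ - u)^2 := by
      linear_combination (c*(u - ρ)) * hquad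
    have hsq : 0 < (ρ - u)^2 := by
      have : ρ - u ≠ 0 := sub_ne_zero.mpr hne
      positivity
    nlinarith [mul_pos hK hsq]
  -- positivity of s u
  have hsu : 0 < s a c r u := by
    rw [hs_eq u hu0 hu1]
    exact div_pos (hP u hu0 hu1) (hQ u hu0 hu1)
  -- conclude about S
  unfold S
  have : Real.logb 2 (s a c r u) < Real.logb 2 (s a c r ρ) :=
    Real.logb_lt_logb (by norm_num) hsu hsuρ
  linarith
end

section
/- Assume σA² > 0, σcov² > 0, σrec² > 0 and σcov² > 4σrec². Then s(Υ) < (σA² + σcov²)². (Consequently the high-SNR mutual-information gain G = (1/2)·log₂((σA² + σcov²)²/s(Υ)) of the splitting receiver over the coherent-detection receiver is strictly positive.) -/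
set_option maxHeartbeats 1000000


/-- s(Υ) < (σA² + σcov²)², so the high-SNR mutual-information gain
of the splitting receiver over the CD receiver is strictly positive. -/
theorem stmt_4 (a c r : ℝ) (ha : 0 < a) (hc : 0 < c) (hr : 0 < r)
    (h4 : 4 * r < c) :
    s a c r (Upsilon a c r) < (a + c) ^ 2 := by
  have hc2r : 0 < c - 2 * r := by linarith
  have hc4r : 0 < c - 4 * r := by linarith
  have hacr : 0 < a + c - 2 * r := by linarith
  have hD : 0 < a * (c - 4 * r) * (c - 2 * r) := by positivity
  -- key polynomial inequality
  have hK : 2 * r * (c - 2 * r) * (2 * a + c) ^ 2 <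
      c ^ 2 * (a + 2 * r) * (a + c - 2 * r) := by
    nlinarith [mul_pos ha hc4r, mul_pos hr hc4r, sq_nonneg (c - 4 * r),
      mul_pos (mul_pos ha ha) hc4r, mul_pos (mul_pos hr hr) hc4r,
      mul_pos (mul_pos ha hr) hc4r, mul_pos (mul_pos hc4r hc4r) hr,
      mul_pos (mul_pos hc4r hc4r) ha]
  set Q := Real.sqrt (2 * Psi a c r) with hQdef
  have hPsi : 0 < 2 * Psi a c r := by unfold Psi; positivity
  have hQ2 : Q ^ 2 = 2 * Psi a c r := Real.sq_sqrt hPsi.le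
  have hQpos : 0 < Q := Real.sqrt_pos.mpr hPsi
  -- upper bound on Q
  have hQlt : Q * (2 * a + c) < c ^ 2 * (a + 2 * r) * (a + c - 2 * r) := by
    have hsq : (Q * (2 * a + c)) ^ 2 <
        (c ^ 2 * (a + 2 * r) * (a + c - 2 * r)) ^ 2 := by
      have : (Q * (2 * a + c)) ^ 2 = 2 * Psi a c r * (2 * a + c) ^ 2 := by
        rw [mul_pow, hQ2]
      rw [this]
      unfold Psi
      nlinarith [mul_pos (mul_pos (mul_pos hc2r hr) (by positivity : (0:ℝ) < c ^ 2 * (a + 2 * r))) (sub_pos.mpr hK),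
        mul_pos (mul_pos (by positivity : (0:ℝ) < c ^ 2 * (a + 2 * r)) hacr) (sub_pos.mpr hK)]
    nlinarith [mul_pos hQpos (by linarith : (0:ℝ) < 2 * a + c),
      (by positivity : (0:ℝ) < c ^ 2 * (a + 2 * r) * (a + c - 2 * r))]
  -- lower bound on Q
  have hQgt : 2 * r * (c - 2 * r) * (2 * a + c) < Q := by
    have hsq : (2 * r * (c - 2 * r) * (2 * a + c)) ^ 2 < Q ^ 2 := by
      rw [hQ2]; unfold Psi
      nlinarith [mul_pos (mul_pos hr hc2r) (sub_pos.mpr hK)]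
    nlinarith [hQpos, (by positivity : (0:ℝ) < 2 * r * (c - 2 * r) * (2 * a + c))]
  set ρ := Upsilon a c r with hρdef
  have hρeq : ρ = (c * (c - 2 * r) * (a + 2 * r) - Q) / (a * (c - 4 * r) * (c - 2 * r)) := rfl
  -- ρ < 1
  have hρ1 : ρ < 1 := by
    rw [hρeq, div_lt_one hD]
    nlinarith [hQgt]
  -- c(a+2r) < (c-2r)(2a+c)ρ
  have hP : c * (a + 2 * r) < (c - 2 * r) * (2 * a + c) * ρ := by
    rw [hρeq, ← mul_div_assoc, lt_div_iff₀ hD]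
    nlinarith [hQlt, mul_pos hc2r (by linarith : (0:ℝ) < 2 * a + c)]
  have hρ0 : 0 < ρ := by
    nlinarith [hP, mul_pos hc2r (by linarith : (0:ℝ) < 2 * a + c), mul_pos hc (by positivity : (0:ℝ) < a + 2 * r)]
  -- positivity facts for denominators
  have h1ρ : 0 < 1 - ρ := by linarith
  have hden : 0 < c - (c - 2 * r) * ρ := by nlinarith [mul_lt_of_lt_one_right hc2r hρ1]
  have hsum : 0 < c / ρ + 2 * r / (1 - ρ) := by positivity
  have hseq : s a c r ρ = (c + a * ρ) * (a * (c - (c - 2 * r) * ρ) + 2 * c * r) /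
      (ρ * (c - (c - 2 * r) * ρ)) := by
    unfold s
    rw [div_add_div _ _ (ne_of_gt hρ0) (ne_of_gt h1ρ)] at *
    field_simp [ne_of_gt (show 0 < c * (1 - ρ) + ρ * (2 * r) by nlinarith [mul_pos hc h1ρ, mul_pos hρ0 hr]),
      ne_of_gt (show 0 < c - ρ * (c - 2 * r) by linarith [hden])]
    ring
  rw [hseq, div_lt_iff₀ (by positivity)]
  nlinarith [mul_pos h1ρ (sub_pos.mpr hP), mul_pos (mul_pos hc h1ρ) (sub_pos.mpr hP)]
end
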